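/- The operations 'uncoll' and 'labeledcoll' give a bijective correspondence between ord-transitive models and labeled models: if M is ord-transitive then labeledcoll(M) is a labeled model and uncoll(labeledcoll(M)) = M; conversely if (M, f) is a labeled model then uncoll(M, f) is an ord-transitive model and labeledcoll(uncoll(M, f)) = (M, f). -/

import Mathlib

namespace NepPaper

/-- `x` is a (von Neumann) ordinal. -/
def IsOrd (x : ZFSet) : Prop := x.IsOrdinal

/-- `M` believes that `x` is an ordinal: the Δ₀ formula "x is transitive and
∈-trichotomous" relativized to `M` (all quantifiers range over `M`). -/
def OrdIn (M x : ZFSet) : Prop :=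
  (∀ y ∈ M, y ∈ x → ∀ z ∈ M, z ∈ y → z ∈ x) ∧
  (∀ y ∈ M, ∀ z ∈ M, y ∈ x → z ∈ x → y ∈ z ∨ y = z ∨ z ∈ y)

/-- `M` satisfies the extensionality axiom. -/
def Extensional (M : ZFSet) : Prop :=
  ∀ x ∈ M, ∀ y ∈ M, (∀ z ∈ M, z ∈ x ↔ z ∈ y) → x = y

/-- A (sufficient) fragment of ZFC*, relativized to `M`: extensionality,
empty set, pairing, union and set difference. -/
def ZFCfrag (M : ZFSet) : Prop :=
  Extensional M ∧
  (∃ e ∈ M, ∀ z ∈ M, z ∉ e) ∧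
  (∀ x ∈ M, ∀ y ∈ M, ∃ u ∈ M, ∀ z ∈ M, (z ∈ u ↔ (z = x ∨ z = y))) ∧
  (∀ x ∈ M, ∀ y ∈ M, ∃ u ∈ M, ∀ z ∈ M, (z ∈ u ↔ (z ∈ x ∨ z ∈ y))) ∧
  (∀ x ∈ M, ∀ y ∈ M, ∃ u ∈ M, ∀ z ∈ M, (z ∈ u ↔ (z ∈ x ∧ z ∉ y)))

/-- `M` believes that `y` is the set ω (the least inductive set), relativized to `M`. -/
def OmegaIn (M y : ZFSet) : Prop :=
  OrdIn M y ∧ (∅ : ZFSet) ∈ y ∧ (∀ z ∈ M, z ∈ y → insert z z ∈ y) ∧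
  ∀ w ∈ M, ((∅ : ZFSet) ∈ w ∧ ∀ z ∈ M, z ∈ w → insert z z ∈ w) →
    ∀ z ∈ M, z ∈ y → z ∈ w

/-- `M` is ord-absolute: it is a model (of a sufficient fragment of ZFC),
ω^M = ω, ω ⊆ M, and ON^M ⊆ ON. -/
def OrdAbsolute (M : ZFSet) : Prop :=
  ZFCfrag M ∧ ZFSet.omega ∈ M ∧ OmegaIn M ZFSet.omega ∧
  (∀ n ∈ ZFSet.omega, n ∈ M) ∧ (∀ x ∈ M, OrdIn M x → IsOrd x)

/-- `M` is ord-transitive: ord-absolute, and every non-ordinal element is a subset. -/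
def OrdTransitive (M : ZFSet) : Prop :=
  OrdAbsolute M ∧ ∀ x ∈ M, ¬ IsOrd x → ∀ t ∈ x, t ∈ M

/-- `i` is the ord-collapse of `M`: `i x = x` for ordinals `x`, and
`i x = {i t : t ∈ x ∩ M}` otherwise.  (This recursion on ∈ has a unique solution.) -/
def OrdcolChar (M : ZFSet) (i : ZFSet → ZFSet) : Prop :=
  (∀ x : ZFSet, IsOrd x → i x = x) ∧
  (∀ x : ZFSet, ¬ IsOrd x → ∀ z : ZFSet, (z ∈ i x ↔ ∃ t ∈ x, t ∈ M ∧ i t = z))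

/-- `j` is the transitive (Mostowski) collapse of `M`:
`j x = {j t : t ∈ x ∩ M}` for all `x`. -/
def CollapseChar (M : ZFSet) (j : ZFSet → ZFSet) : Prop :=
  ∀ x z : ZFSet, z ∈ j x ↔ ∃ t ∈ x, t ∈ M ∧ j t = z


/-- A labeled model: a transitive countable model `M` (of a sufficient fragment
of ZFC) together with a strictly monotonic `f : M ∩ ON → ON` with `f α = α`
for `α ≤ ω`. -/
def IsLabeledModel (M : ZFSet) (f : ZFSet → ZFSet) : Prop :=
  M.IsTransitive ∧ M.toSet.Countable ∧ ZFCfrag M ∧ ZFSet.omega ∈ M ∧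
  (∀ α ∈ M, IsOrd α → IsOrd (f α)) ∧
  (∀ α ∈ M, ∀ β ∈ M, IsOrd α → IsOrd β → α ∈ β → f α ∈ f β) ∧
  (∀ α ∈ M, IsOrd α → (α ∈ ZFSet.omega ∨ α = ZFSet.omega) → f α = α)

/-- `i` is the map of `uncoll(M, f)`: `i x = f x` for ordinals, and
`i x = {i y : y ∈ x}` otherwise. -/
def UncollChar (f i : ZFSet → ZFSet) : Prop :=
  (∀ x : ZFSet, IsOrd x → i x = f x) ∧
  (∀ x : ZFSet, ¬ IsOrd x → ∀ z : ZFSet, (z ∈ i x ↔ ∃ y ∈ x, i y = z))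

/-- A countable ord-transitive model. -/
def OrdTransitiveCtbl (M : ZFSet) : Prop := OrdTransitive M ∧ M.toSet.Countable

lemma isOrd_of_forall {x : ZFSet} (h1 : x.IsTransitive) (h2 : ∀ y ∈ x, IsOrd y) : IsOrd x :=
  ⟨h1, fun {y z w} hyz hzw hwx => (h2 w hwx).mem_trans hyz hzw⟩

lemma isOrd_mem {x y : ZFSet} (h : IsOrd x) (hy : y ∈ x) : IsOrd y := by
  refine ⟨fun a ha b hb => h.mem_trans' hb ha hy, fun {a b c} hab hbc hcy => ?_⟩
  exact h.mem_trans' hab hbc (h.mem_trans hcy hy)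

lemma no3cycle : ∀ c a b : ZFSet, a ∈ b → b ∈ c → c ∈ a → False := by
  intro c
  induction c using ZFSet.inductionOn with
  | _ c IH => exact fun a b hab hbc hca => IH b hbc c a hca hab hbc

lemma isOrd_of_trans_trich {x : ZFSet} (h1 : x.IsTransitive)
    (h2 : ∀ y ∈ x, ∀ z ∈ x, y ∈ z ∨ y = z ∨ z ∈ y) : IsOrd x := by
  refine ⟨h1, fun {y z w} hyz hzw hwx => ?_⟩
  have hzx : z ∈ x := h1.mem_trans hzw hwx
  have hyx : y ∈ x := h1.mem_trans hyz hzx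
  rcases h2 y hyx w hwx with h | h | h
  · exact h
  · subst h; exact absurd hzw (ZFSet.mem_asymm hyz)
  · exact (no3cycle z w y h hyz hzw).elim

lemma ord_trichotomy : ∀ x y : ZFSet, IsOrd x → IsOrd y → x ∈ y ∨ x = y ∨ y ∈ x := by
  intro x
  induction x using ZFSet.inductionOn with
  | _ x IHx =>
  intro y
  induction y using ZFSet.inductionOn with
  | _ y IHy =>
  intro hx hy
  by_cases hxy : x ∈ y
  · exact Or.inl hxy
  by_cases hyx : y ∈ x
  · exact Or.inr (Or.inr hyx)
  refine Or.inr (Or.inl (ZFSet.ext fun t => ⟨fun htx => ?_, fun hty => ?_⟩))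
  · rcases IHx t htx y (isOrd_mem hx htx) hy with h | h | h
    · exact h
    · exact absurd (h ▸ htx) hyx
    · exact absurd (hx.mem_trans h htx) hyx
  · rcases IHy t hty hx (isOrd_mem hy hty) with h | h | h
    · exact absurd (hy.mem_trans h hty) hxy
    · exact absurd (h ▸ hty) hxy
    · exact h

def natZ : ℕ → ZFSet
  | 0 => ∅
  | n + 1 => insert (natZ n) (natZ n)

lemma natZ_mem_omega (n : ℕ) : natZ n ∈ ZFSet.omega := by
  induction n with
  | zero => exact ZFSet.omega_zero
  | succ n IH => exact ZFSet.omega_succ IH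

lemma mk_ofNat (n : ℕ) : ZFSet.mk (PSet.ofNat n) = natZ n := by
  induction n with
  | zero => rfl
  | succ n IH => show ZFSet.mk (insert _ _) = _; rw [natZ, ← IH]; rfl

lemma mem_omega_iff {z : ZFSet} : z ∈ ZFSet.omega ↔ ∃ n, z = natZ n := by
  constructor
  · refine Quotient.inductionOn z ?_
    intro p hp
    have hp' : p ∈ PSet.omega := ZFSet.mk_mem_iff.mp hp
    obtain ⟨⟨n⟩, he⟩ := hp'
    exact ⟨n, by rw [← mk_ofNat]; exact ZFSet.sound he⟩
  · rintro ⟨n, rfl⟩; exact natZ_mem_omega n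

lemma isOrd_empty : IsOrd (∅ : ZFSet) :=
  ⟨ZFSet.isTransitive_empty, fun {y z w} _ _ hw => absurd hw (ZFSet.notMem_empty w)⟩

lemma isOrd_succ {x : ZFSet} (hx : IsOrd x) : IsOrd (insert x x) := by
  constructor
  · intro y hy t ht
    rcases ZFSet.mem_insert_iff.mp hy with rfl | hy
    · exact ZFSet.mem_insert_iff.mpr (Or.inr ht)
    · exact ZFSet.mem_insert_iff.mpr (Or.inr (hx.subset_of_mem hy ht))
  · intro a b c hab hbc hc
    rcases ZFSet.mem_insert_iff.mp hc with rfl | hc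
    · exact hx.mem_trans hab hbc
    · exact hx.mem_trans' hab hbc hc

lemma natZ_isOrd (n : ℕ) : IsOrd (natZ n) := by
  induction n with
  | zero => exact isOrd_empty
  | succ n IH => exact isOrd_succ IH

lemma natZ_subset_omega (n : ℕ) : natZ n ⊆ ZFSet.omega := by
  induction n with
  | zero => intro t ht; exact absurd ht (ZFSet.notMem_empty t)
  | succ n IH =>
    intro t ht
    rcases ZFSet.mem_insert_iff.mp ht with rfl | ht
    · exact natZ_mem_omega n
    · exact IH ht

lemma omega_isOrd : IsOrd ZFSet.omega := by
  refine isOrd_of_forall (fun z hz => ?_) (fun z hz => ?_) <;>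
    obtain ⟨n, rfl⟩ := mem_omega_iff.mp hz
  · exact natZ_subset_omega n
  · exact natZ_isOrd n

theorem part1 : ∀ M : ZFSet, OrdTransitiveCtbl M →
      ∀ j : ZFSet → ZFSet, CollapseChar M j →
      ∀ M' : ZFSet, (∀ z : ZFSet, z ∈ M' ↔ ∃ x ∈ M, j x = z) →
      ∀ f : ZFSet → ZFSet, (∀ α ∈ M, IsOrd α → f (j α) = α) →
        IsLabeledModel M' f ∧
        ∀ i : ZFSet → ZFSet, UncollChar f i →
          ∀ U : ZFSet, (∀ z : ZFSet, z ∈ U ↔ ∃ x ∈ M', i x = z) → U = M := by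
  intro M hM j hj M' hM' f hf
  obtain ⟨⟨⟨hfrag, hωM, hωIn, hωsub, habs⟩, hordtr⟩, hctbl⟩ := hM
  obtain ⟨hext, hempty, hpair, hunion, hdiff⟩ := hfrag
  have jinj : ∀ x, x ∈ M → ∀ y ∈ M, j x = j y → x = y := by
    intro x
    induction x using ZFSet.inductionOn with
    | _ x IH =>
    intro hxM y hyM hxy
    refine hext x hxM y hyM fun z hzM => ⟨fun hzx => ?_, fun hzy => ?_⟩
    · have h1 : j z ∈ j y := hxy ▸ (hj x (j z)).mpr ⟨z, hzx, hzM, rfl⟩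
      obtain ⟨t, hty, htM, hjt⟩ := (hj y (j z)).mp h1
      have hzt := IH z hzx hzM t htM hjt.symm
      rwa [hzt]
    · have h1 : j z ∈ j x := hxy ▸ (hj y (j z)).mpr ⟨z, hzy, hzM, rfl⟩
      obtain ⟨t, htx, htM, hjt⟩ := (hj x (j z)).mp h1
      have htz := IH t htx htM z hzM hjt
      rwa [← htz]
  have jnat : ∀ n, n ∈ ZFSet.omega → j n = n := by
    intro n
    induction n using ZFSet.inductionOn with
    | _ n IH =>
    intro hn
    refine ZFSet.ext fun z => ?_
    rw [hj n z]
    constructor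
    · rintro ⟨t, htn, htM, rfl⟩
      rw [IH t htn (omega_isOrd.mem_trans htn hn)]
      exact htn
    · intro hzn
      have hzω : z ∈ ZFSet.omega := omega_isOrd.mem_trans hzn hn
      exact ⟨z, hzn, hωsub z hzω, IH z hzn hzω⟩
  have jω : j ZFSet.omega = ZFSet.omega := by
    refine ZFSet.ext fun z => ?_
    rw [hj]
    constructor
    · rintro ⟨t, ht, htM, rfl⟩
      rw [jnat t ht]; exact ht
    · intro hz
      exact ⟨z, hz, hωsub z hz, jnat z hz⟩
  have jord : ∀ x, x ∈ M → IsOrd x → IsOrd (j x) := by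
    intro x
    induction x using ZFSet.inductionOn with
    | _ x IH =>
    intro hxM hx
    refine isOrd_of_forall ?_ ?_
    · intro y hy z hz
      obtain ⟨t, htx, htM, rfl⟩ := (hj x y).mp hy
      obtain ⟨s, hst, hsM, rfl⟩ := (hj t z).mp hz
      exact (hj x _).mpr ⟨s, hx.mem_trans hst htx, hsM, rfl⟩
    · intro y hy
      obtain ⟨t, htx, htM, rfl⟩ := (hj x y).mp hy
      exact IH t htx htM (isOrd_mem hx htx)
  have jordrev : ∀ x, x ∈ M → IsOrd (j x) → IsOrd x := by
    intro x hxM hjx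
    refine habs x hxM ⟨?_, ?_⟩
    · intro y hyM hyx z hzM hzy
      have h1 : j y ∈ j x := (hj x _).mpr ⟨y, hyx, hyM, rfl⟩
      have h2 : j z ∈ j y := (hj y _).mpr ⟨z, hzy, hzM, rfl⟩
      have h3 : j z ∈ j x := hjx.mem_trans h2 h1
      obtain ⟨t, htx, htM, hjt⟩ := (hj x _).mp h3
      rwa [jinj z hzM t htM hjt.symm]
    · intro y hyM z hzM hyx hzx
      have h1 : j y ∈ j x := (hj x _).mpr ⟨y, hyx, hyM, rfl⟩
      have h2 : j z ∈ j x := (hj x _).mpr ⟨z, hzx, hzM, rfl⟩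
      rcases ord_trichotomy (j y) (j z) (isOrd_mem hjx h1) (isOrd_mem hjx h2) with h | h | h
      · obtain ⟨t, htz, htM, hjt⟩ := (hj z _).mp h
        left; rwa [jinj y hyM t htM hjt.symm]
      · right; left; exact jinj y hyM z hzM h
      · obtain ⟨t, hty, htM, hjt⟩ := (hj y _).mp h
        right; right; rwa [jinj z hzM t htM hjt.symm]
  have hM'mem : ∀ {x : ZFSet}, x ∈ M → j x ∈ M' := fun {x} hx => (hM' _).mpr ⟨x, hx, rfl⟩
  have hM'trans : M'.IsTransitive := by
    intro z hz y hy
    obtain ⟨x, hxM, rfl⟩ := (hM' z).mp hz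
    obtain ⟨t, htx, htM, rfl⟩ := (hj x y).mp hy
    exact hM'mem htM
  have ordM' : ∀ α' ∈ M', IsOrd α' → ∃ α, α ∈ M ∧ IsOrd α ∧ j α = α' := by
    intro α' hα' hord
    obtain ⟨α, hαM, rfl⟩ := (hM' α').mp hα'
    exact ⟨α, hαM, jordrev α hαM hord, rfl⟩
  have hc : M'.toSet.Countable := by
    have he : M'.toSet = j '' M.toSet := by
      ext z
      exact hM' z
    rw [he]; exact hctbl.image j
  have hext' : Extensional M' := by
    intro x hx y hy h
    refine ZFSet.ext fun z => ⟨fun hz => ?_, fun hz => ?_⟩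
    · exact (h z (hM'trans x hx hz)).mp hz
    · exact (h z (hM'trans y hy hz)).mpr hz
  have hemp' : ∃ e ∈ M', ∀ z ∈ M', z ∉ e := by
    obtain ⟨e, heM, he⟩ := hempty
    refine ⟨j e, hM'mem heM, fun z _ hze => ?_⟩
    obtain ⟨t, hte, htM, _⟩ := (hj e z).mp hze
    exact he t htM hte
  have hpair' : ∀ x' ∈ M', ∀ y' ∈ M', ∃ u ∈ M', ∀ z ∈ M', (z ∈ u ↔ (z = x' ∨ z = y')) := by
    intro x' hx' y' hy'
    obtain ⟨x, hxM, rfl⟩ := (hM' x').mp hx'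
    obtain ⟨y, hyM, rfl⟩ := (hM' y').mp hy'
    obtain ⟨u, huM, hu⟩ := hpair x hxM y hyM
    refine ⟨j u, hM'mem huM, fun z _ => ⟨fun hzu => ?_, fun h => ?_⟩⟩
    · obtain ⟨t, htu, htM, rfl⟩ := (hj u z).mp hzu
      rcases (hu t htM).mp htu with rfl | rfl
      · exact Or.inl rfl
      · exact Or.inr rfl
    · rcases h with rfl | rfl
      · exact (hj u _).mpr ⟨x, (hu x hxM).mpr (Or.inl rfl), hxM, rfl⟩
      · exact (hj u _).mpr ⟨y, (hu y hyM).mpr (Or.inr rfl), hyM, rfl⟩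
  have hun' : ∀ x' ∈ M', ∀ y' ∈ M', ∃ u ∈ M', ∀ z ∈ M', (z ∈ u ↔ (z ∈ x' ∨ z ∈ y')) := by
    intro x' hx' y' hy'
    obtain ⟨x, hxM, rfl⟩ := (hM' x').mp hx'
    obtain ⟨y, hyM, rfl⟩ := (hM' y').mp hy'
    obtain ⟨u, huM, hu⟩ := hunion x hxM y hyM
    refine ⟨j u, hM'mem huM, fun z _ => ⟨fun hzu => ?_, fun h => ?_⟩⟩
    · obtain ⟨t, htu, htM, rfl⟩ := (hj u z).mp hzu
      rcases (hu t htM).mp htu with h | h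
      · exact Or.inl ((hj x _).mpr ⟨t, h, htM, rfl⟩)
      · exact Or.inr ((hj y _).mpr ⟨t, h, htM, rfl⟩)
    · rcases h with h | h
      · obtain ⟨t, htx, htM, rfl⟩ := (hj x z).mp h
        exact (hj u _).mpr ⟨t, (hu t htM).mpr (Or.inl htx), htM, rfl⟩
      · obtain ⟨t, hty, htM, rfl⟩ := (hj y z).mp h
        exact (hj u _).mpr ⟨t, (hu t htM).mpr (Or.inr hty), htM, rfl⟩
  have hdiff' : ∀ x' ∈ M', ∀ y' ∈ M', ∃ u ∈ M', ∀ z ∈ M', (z ∈ u ↔ (z ∈ x' ∧ z ∉ y')) := by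
    intro x' hx' y' hy'
    obtain ⟨x, hxM, rfl⟩ := (hM' x').mp hx'
    obtain ⟨y, hyM, rfl⟩ := (hM' y').mp hy'
    obtain ⟨u, huM, hu⟩ := hdiff x hxM y hyM
    refine ⟨j u, hM'mem huM, fun z _ => ⟨fun hzu => ?_, fun h => ?_⟩⟩
    · obtain ⟨t, htu, htM, rfl⟩ := (hj u z).mp hzu
      obtain ⟨htx, hty⟩ := (hu t htM).mp htu
      refine ⟨(hj x _).mpr ⟨t, htx, htM, rfl⟩, fun hjy => ?_⟩
      obtain ⟨s, hsy, hsM, hjs⟩ := (hj y _).mp hjy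
      exact hty ((jinj t htM s hsM hjs.symm) ▸ hsy)
    · obtain ⟨h1, h2⟩ := h
      obtain ⟨t, htx, htM, rfl⟩ := (hj x z).mp h1
      have hty : t ∉ y := fun hty => h2 ((hj y _).mpr ⟨t, hty, htM, rfl⟩)
      exact (hj u _).mpr ⟨t, (hu t htM).mpr ⟨htx, hty⟩, htM, rfl⟩
  have hford : ∀ α' ∈ M', IsOrd α' → IsOrd (f α') := by
    intro α' hα' h
    obtain ⟨α, hαM, hαord, rfl⟩ := ordM' α' hα' h
    rw [hf α hαM hαord]; exact hαord
  have hfmono : ∀ α' ∈ M', ∀ β' ∈ M', IsOrd α' → IsOrd β' → α' ∈ β' → f α' ∈ f β' := by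
    intro α' hα' β' hβ' hαo hβo hmem
    obtain ⟨α, hαM, hαord, rfl⟩ := ordM' α' hα' hαo
    obtain ⟨β, hβM, hβord, rfl⟩ := ordM' β' hβ' hβo
    rw [hf α hαM hαord, hf β hβM hβord]
    obtain ⟨t, htβ, htM, hjt⟩ := (hj β _).mp hmem
    rwa [jinj α hαM t htM hjt.symm]
  have hffix : ∀ α' ∈ M', IsOrd α' → (α' ∈ ZFSet.omega ∨ α' = ZFSet.omega) → f α' = α' := by
    intro α' hα' hαo hcase
    obtain ⟨α, hαM, hαord, rfl⟩ := ordM' α' hα' hαo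
    rw [hf α hαM hαord]
    rcases hcase with h | h
    · exact jinj α hαM (j α) (hωsub _ h) (jnat _ h).symm
    · rw [h]
      exact jinj α hαM ZFSet.omega hωM (by rw [h, jω])
  refine ⟨⟨hM'trans, hc, ⟨hext', hemp', hpair', hun', hdiff'⟩, jω ▸ hM'mem hωM, hford, hfmono, hffix⟩, ?_⟩
  intro i hi U hU
  obtain ⟨hiord, hinot⟩ := hi
  have key : ∀ x, x ∈ M → i (j x) = x := by
    intro x
    induction x using ZFSet.inductionOn with
    | _ x IH =>
    intro hxM
    by_cases hx : IsOrd x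
    · rw [hiord (j x) (jord x hxM hx), hf x hxM hx]
    · have hjx : ¬ IsOrd (j x) := fun h => hx (jordrev x hxM h)
      refine ZFSet.ext fun z => ?_
      rw [hinot (j x) hjx z]
      constructor
      · rintro ⟨y, hy, rfl⟩
        obtain ⟨t, htx, htM, rfl⟩ := (hj x y).mp hy
        rw [IH t htx htM]; exact htx
      · intro hzx
        have hzM : z ∈ M := hordtr x hxM hx z hzx
        exact ⟨j z, (hj x _).mpr ⟨z, hzx, hzM, rfl⟩, IH z hzx hzM⟩
  refine ZFSet.ext fun z => ?_
  rw [hU z]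
  constructor
  · rintro ⟨x', hx', rfl⟩
    obtain ⟨x, hxM, rfl⟩ := (hM' x').mp hx'
    rw [key x hxM]; exact hxM
  · intro hzM
    exact ⟨j z, hM'mem hzM, key z hzM⟩



theorem part2 : ∀ M' : ZFSet, ∀ f : ZFSet → ZFSet, IsLabeledModel M' f →
      ∀ i : ZFSet → ZFSet, UncollChar f i →
      ∀ U : ZFSet, (∀ z : ZFSet, z ∈ U ↔ ∃ x ∈ M', i x = z) →
        OrdTransitiveCtbl U ∧
        ∀ j : ZFSet → ZFSet, CollapseChar U j →
          (∀ z : ZFSet, (∃ x ∈ U, j x = z) ↔ z ∈ M') ∧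
          (∀ x ∈ U, IsOrd x → f (j x) = x) := by
  intro M' f hL i hi U hU
  obtain ⟨htr, hctbl, ⟨hext, hempty, hpair, hunion, hdiff⟩, hωM', hford, hfmono, hffix⟩ := hL
  obtain ⟨hiord, hinot⟩ := hi
  have finj : ∀ α ∈ M', ∀ β ∈ M', IsOrd α → IsOrd β → f α = f β → α = β := by
    intro α hα β hβ hαo hβo h
    rcases ord_trichotomy α β hαo hβo with hm | hm | hm
    · have := hfmono α hα β hβ hαo hβo hm
      rw [h] at this
      exact absurd this (ZFSet.mem_irrefl _)
    · exact hm
    · have := hfmono β hβ α hα hβo hαo hm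
      rw [h] at this
      exact absurd this (ZFSet.mem_irrefl _)
  have L1 : ∀ x, x ∈ M' → IsOrd (i x) → IsOrd x := by
    intro x
    induction x using ZFSet.inductionOn with
    | _ x IH =>
    intro hxM hix
    by_contra hx
    have hxe : ∀ z, z ∈ i x ↔ ∃ y ∈ x, i y = z := hinot x hx
    have hsub : x ⊆ M' := htr x hxM
    have hordel : ∀ z ∈ x, IsOrd z := fun z hz =>
      IH z hz (hsub hz) (isOrd_mem hix ((hxe (i z)).mpr ⟨z, hz, rfl⟩))
    have htrans : x.IsTransitive := by
      intro z hz s hs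
      have hzo := hordel z hz
      have hso := isOrd_mem hzo hs
      have hzM := hsub hz
      have hsM : s ∈ M' := htr z hzM hs
      have h1 : f s ∈ f z := hfmono s hsM z hzM hso hzo hs
      have h2 : f z ∈ i x := (hxe (f z)).mpr ⟨z, hz, hiord z hzo⟩
      have h3 : f s ∈ i x := hix.mem_trans h1 h2
      obtain ⟨w, hwx, hiw⟩ := (hxe (f s)).mp h3
      have hwo := hordel w hwx
      have hws : w = s := finj w (hsub hwx) s hsM hwo hso (by rw [← hiord w hwo, hiw])
      exact hws ▸ hwx
    exact hx (isOrd_of_forall htrans hordel)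
  have iinj : ∀ x, x ∈ M' → ∀ y ∈ M', i x = i y → x = y := by
    intro x
    induction x using ZFSet.inductionOn with
    | _ x IH =>
    intro hxM y hyM h
    by_cases hx : IsOrd x <;> by_cases hy : IsOrd y
    · refine finj x hxM y hyM hx hy ?_
      rw [← hiord x hx, ← hiord y hy, h]
    · refine absurd (L1 y hyM ?_) hy
      rw [← h, hiord x hx]; exact hford x hxM hx
    · refine absurd (L1 x hxM ?_) hx
      rw [h, hiord y hy]; exact hford y hyM hy
    · refine ZFSet.ext fun z => ⟨fun hz => ?_, fun hz => ?_⟩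
      · have h1 : i z ∈ i y := by rw [← h]; exact (hinot x hx _).mpr ⟨z, hz, rfl⟩
        obtain ⟨t, hty, hit⟩ := (hinot y hy _).mp h1
        rwa [IH z hz (htr x hxM hz) t (htr y hyM hty) hit.symm]
      · have h1 : i z ∈ i x := by rw [h]; exact (hinot y hy _).mpr ⟨z, hz, rfl⟩
        obtain ⟨t, htx, hit⟩ := (hinot x hx _).mp h1
        rwa [← IH t htx (htr x hxM htx) z (htr y hyM hz) hit]
  have L2 : ∀ x ∈ M', ∀ y ∈ M', (i y ∈ i x ↔ y ∈ x) := by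
    intro x hxM y hyM
    by_cases hx : IsOrd x
    · rw [hiord x hx]
      by_cases hy : IsOrd y
      · rw [hiord y hy]
        constructor
        · intro h
          rcases ord_trichotomy y x hy hx with hm | hm | hm
          · exact hm
          · subst hm; exact absurd h (ZFSet.mem_irrefl _)
          · exact absurd (hfmono x hxM y hyM hx hy hm) (ZFSet.mem_asymm h)
        · exact hfmono y hyM x hxM hy hx
      · constructor
        · intro h
          exact absurd (L1 y hyM (isOrd_mem (hford x hxM hx) h)) hy
        · intro h
          exact absurd (isOrd_mem hx h) hy
    · constructor
      · intro h
        obtain ⟨t, htx, hit⟩ := (hinot x hx _).mp h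
        rwa [iinj y hyM t (htr x hxM htx) hit.symm]
      · intro h
        exact (hinot x hx _).mpr ⟨y, h, rfl⟩
  have hUmem : ∀ {x : ZFSet}, x ∈ M' → i x ∈ U := fun {x} hx => (hU _).mpr ⟨x, hx, rfl⟩
  have hωsub' : ∀ n ∈ ZFSet.omega, n ∈ M' := fun n hn => htr _ hωM' hn
  have inat : ∀ n ∈ ZFSet.omega, i n = n := by
    intro n hn
    have hno : IsOrd n := isOrd_mem omega_isOrd hn
    rw [hiord n hno]
    exact hffix n (hωsub' n hn) hno (Or.inl hn)
  have iω : i ZFSet.omega = ZFSet.omega := by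
    rw [hiord _ omega_isOrd]; exact hffix _ hωM' omega_isOrd (Or.inr rfl)
  have hωU : ZFSet.omega ∈ U := iω ▸ hUmem hωM'
  have hωsubU : ∀ n ∈ ZFSet.omega, n ∈ U := fun n hn => (inat n hn) ▸ hUmem (hωsub' n hn)
  have hextU : Extensional U := by
    intro a ha b hb h
    obtain ⟨x, hxM, rfl⟩ := (hU a).mp ha
    obtain ⟨y, hyM, rfl⟩ := (hU b).mp hb
    have hxy : x = y := by
      refine ZFSet.ext fun t => ⟨fun ht => ?_, fun ht => ?_⟩
      · have htM : t ∈ M' := htr x hxM ht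
        have h1 : i t ∈ i x := (L2 x hxM t htM).mpr ht
        have h2 : i t ∈ i y := (h (i t) (hUmem htM)).mp h1
        exact (L2 y hyM t htM).mp h2
      · have htM : t ∈ M' := htr y hyM ht
        have h1 : i t ∈ i y := (L2 y hyM t htM).mpr ht
        have h2 : i t ∈ i x := (h (i t) (hUmem htM)).mpr h1
        exact (L2 x hxM t htM).mp h2
    rw [hxy]
  have hempU : ∃ e ∈ U, ∀ z ∈ U, z ∉ e :=
    ⟨∅, hωsubU ∅ ZFSet.omega_zero, fun z _ hz => absurd hz (ZFSet.notMem_empty z)⟩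
  have hpairU : ∀ a ∈ U, ∀ b ∈ U, ∃ u ∈ U, ∀ z ∈ U, (z ∈ u ↔ (z = a ∨ z = b)) := by
    intro a ha b hb
    obtain ⟨x, hxM, rfl⟩ := (hU a).mp ha
    obtain ⟨y, hyM, rfl⟩ := (hU b).mp hb
    obtain ⟨u, huM, hu⟩ := hpair x hxM y hyM
    refine ⟨i u, hUmem huM, fun z hz => ?_⟩
    obtain ⟨w, hwM, rfl⟩ := (hU z).mp hz
    rw [L2 u huM w hwM, hu w hwM]
    constructor
    · rintro (rfl | rfl)
      exacts [Or.inl rfl, Or.inr rfl]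
    · rintro (h | h)
      · exact Or.inl (iinj w hwM x hxM h)
      · exact Or.inr (iinj w hwM y hyM h)
  have hunU : ∀ a ∈ U, ∀ b ∈ U, ∃ u ∈ U, ∀ z ∈ U, (z ∈ u ↔ (z ∈ a ∨ z ∈ b)) := by
    intro a ha b hb
    obtain ⟨x, hxM, rfl⟩ := (hU a).mp ha
    obtain ⟨y, hyM, rfl⟩ := (hU b).mp hb
    obtain ⟨u, huM, hu⟩ := hunion x hxM y hyM
    refine ⟨i u, hUmem huM, fun z hz => ?_⟩
    obtain ⟨w, hwM, rfl⟩ := (hU z).mp hz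
    rw [L2 u huM w hwM, L2 x hxM w hwM, L2 y hyM w hwM]
    exact hu w hwM
  have hdiffU : ∀ a ∈ U, ∀ b ∈ U, ∃ u ∈ U, ∀ z ∈ U, (z ∈ u ↔ (z ∈ a ∧ z ∉ b)) := by
    intro a ha b hb
    obtain ⟨x, hxM, rfl⟩ := (hU a).mp ha
    obtain ⟨y, hyM, rfl⟩ := (hU b).mp hb
    obtain ⟨u, huM, hu⟩ := hdiff x hxM y hyM
    refine ⟨i u, hUmem huM, fun z hz => ?_⟩
    obtain ⟨w, hwM, rfl⟩ := (hU z).mp hz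
    rw [L2 u huM w hwM, L2 x hxM w hwM, L2 y hyM w hwM]
    exact hu w hwM
  have homegaU : OmegaIn U ZFSet.omega := by
    refine ⟨⟨?_, ?_⟩, ZFSet.omega_zero, fun z _ hz => ZFSet.omega_succ hz, ?_⟩
    · intro y _ hy z _ hz
      exact omega_isOrd.mem_trans hz hy
    · intro y _ z _ hy hz
      exact ord_trichotomy y z (isOrd_mem omega_isOrd hy) (isOrd_mem omega_isOrd hz)
    · intro w _ hind z hzU hzω
      obtain ⟨n, rfl⟩ := mem_omega_iff.mp hzω
      clear hzU hzω
      induction n with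
      | zero => exact hind.1
      | succ n IH => exact hind.2 (natZ n) (hωsubU _ (natZ_mem_omega n)) IH
  have habsU : ∀ a ∈ U, OrdIn U a → IsOrd a := by
    intro a ha hin
    obtain ⟨x, hxM, rfl⟩ := (hU a).mp ha
    by_cases hx : IsOrd x
    · rw [hiord x hx]; exact hford x hxM hx
    · exfalso
      apply hx
      have hsub : x ⊆ M' := htr x hxM
      refine isOrd_of_trans_trich ?_ ?_
      · intro z hz s hs
        have hzM := hsub hz
        have hsM := htr z hzM hs
        have h1 : i z ∈ i x := (L2 x hxM z hzM).mpr hz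
        have h2 : i s ∈ i z := (L2 z hzM s hsM).mpr hs
        have h3 : i s ∈ i x := hin.1 (i z) (hUmem hzM) h1 (i s) (hUmem hsM) h2
        exact (L2 x hxM s hsM).mp h3
      · intro z hz t ht
        have hzM := hsub hz
        have htM := hsub ht
        rcases hin.2 (i z) (hUmem hzM) (i t) (hUmem htM) ((L2 x hxM z hzM).mpr hz)
            ((L2 x hxM t htM).mpr ht) with h | h | h
        · exact Or.inl ((L2 t htM z hzM).mp h)
        · exact Or.inr (Or.inl (iinj z hzM t htM h))
        · exact Or.inr (Or.inr ((L2 z hzM t htM).mp h))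
  have hordtrU : ∀ a ∈ U, ¬ IsOrd a → ∀ t ∈ a, t ∈ U := by
    intro a ha hna t hta
    obtain ⟨x, hxM, rfl⟩ := (hU a).mp ha
    have hx : ¬ IsOrd x := fun h => hna (by rw [hiord x h]; exact hford x hxM h)
    obtain ⟨y, hy, rfl⟩ := (hinot x hx t).mp hta
    exact hUmem (htr x hxM hy)
  have hcU : U.toSet.Countable := by
    have he : U.toSet = i '' M'.toSet := by
      ext z
      exact hU z
    rw [he]; exact hctbl.image i
  refine ⟨⟨⟨⟨⟨hextU, hempU, hpairU, hunU, hdiffU⟩, hωU, homegaU, hωsubU, habsU⟩, hordtrU⟩, hcU⟩, ?_⟩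
  intro j hj
  have key : ∀ x, x ∈ M' → j (i x) = x := by
    intro x
    induction x using ZFSet.inductionOn with
    | _ x IH =>
    intro hxM
    refine ZFSet.ext fun z => ?_
    rw [hj (i x) z]
    constructor
    · rintro ⟨t, htix, htU, rfl⟩
      obtain ⟨y, hyM, rfl⟩ := (hU t).mp htU
      have hyx : y ∈ x := (L2 x hxM y hyM).mp htix
      rw [IH y hyx (htr x hxM hyx)]
      exact hyx
    · intro hzx
      have hzM : z ∈ M' := htr x hxM hzx
      exact ⟨i z, (L2 x hxM z hzM).mpr hzx, hUmem hzM, IH z hzx hzM⟩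
  constructor
  · intro z
    constructor
    · rintro ⟨a, ha, rfl⟩
      obtain ⟨x, hxM, rfl⟩ := (hU a).mp ha
      rw [key x hxM]
      exact hxM
    · intro hz
      exact ⟨i z, hUmem hz, key z hz⟩
  · intro a ha hao
    obtain ⟨x, hxM, rfl⟩ := (hU a).mp ha
    have hx : IsOrd x := L1 x hxM hao
    rw [key x hxM, ← hiord x hx]

/-- `uncoll` and `labeledcoll` give a bijective correspondence
between ord-transitive models and labeled models:
(1) if `M` is ord-transitive, `j` its transitive collapse with image `M'`, and
`f` the inverse of `j` on the ordinals, then `(M', f)` is a labeled model and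
`uncoll(M', f) = M`;
(2) if `(M', f)` is a labeled model then `U = uncoll(M', f)` is ord-transitive,
and `labeledcoll(U) = (M', f)`: the transitive collapse `j` of `U` has image
`M'` and `f` is the inverse of `j` on the ordinals of `U`. -/
theorem uncoll_labeledcoll_correspondence :
    (∀ M : ZFSet, OrdTransitiveCtbl M →
      ∀ j : ZFSet → ZFSet, CollapseChar M j →
      ∀ M' : ZFSet, (∀ z : ZFSet, z ∈ M' ↔ ∃ x ∈ M, j x = z) →
      ∀ f : ZFSet → ZFSet, (∀ α ∈ M, IsOrd α → f (j α) = α) →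
        IsLabeledModel M' f ∧
        ∀ i : ZFSet → ZFSet, UncollChar f i →
          ∀ U : ZFSet, (∀ z : ZFSet, z ∈ U ↔ ∃ x ∈ M', i x = z) → U = M) ∧
    (∀ M' : ZFSet, ∀ f : ZFSet → ZFSet, IsLabeledModel M' f →
      ∀ i : ZFSet → ZFSet, UncollChar f i →
      ∀ U : ZFSet, (∀ z : ZFSet, z ∈ U ↔ ∃ x ∈ M', i x = z) →
        OrdTransitiveCtbl U ∧
        ∀ j : ZFSet → ZFSet, CollapseChar U j →
          (∀ z : ZFSet, (∃ x ∈ U, j x = z) ↔ z ∈ M') ∧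
          (∀ x ∈ U, IsOrd x → f (j x) = x)) := by
  exact ⟨part1, part2⟩

end NepPaper
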